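/- arXiv:2507.16232 — 2 statements merged into one kernel-verified Lean document; each statement's English description precedes it below -/
import Mathlib

section
/- If a flow (X,T) is distal and contains a minimal subsystem that is sensitive, then the induced flow (E(X),T) is sensitive. -/
open Filter Set Topology Uniformity

/-- The enveloping semigroup of the flow: the pointwise closure of the translation
maps `x ↦ t • x` inside `X → X` (with the product topology). -/
def envSemigroup (T X : Type*) [SMul T X] [TopologicalSpace X] : Set (X → X) :=
  closure (Set.range fun t : T => fun x : X => t • x)

/-- `(x, y)` is a proximal pair for the `T`-action. -/
def ProxPair (T : Type*) {X : Type*} [SMul T X] [UniformSpace X] (x y : X) : Prop :=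
  ∀ U ∈ 𝓤 X, ∃ t : T, (t • x, t • y) ∈ U

/-- Sensitivity of the subflow on a subset `A` (with the relative uniformity). -/
def SensitiveOn (T : Type*) {X : Type*} [SMul T X] [UniformSpace X] (A : Set X) : Prop :=
  ∃ V ∈ 𝓤 X, ∀ x ∈ A, ∀ U ∈ 𝓤 X, ∃ y ∈ A, (x, y) ∈ U ∧ ∃ t : T, (t • x, t • y) ∉ V

/-- `M` is a minimal subsystem: nonempty, closed, invariant, with no proper
nonempty closed invariant subset. -/
def IsMinimalSubset (T : Type*) {X : Type*} [SMul T X] [TopologicalSpace X]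
    (M : Set X) : Prop :=
  M.Nonempty ∧ IsClosed M ∧ (∀ t : T, ∀ x ∈ M, t • x ∈ M) ∧
    ∀ N ⊆ M, N.Nonempty → IsClosed N → (∀ t : T, ∀ x ∈ N, t • x ∈ N) → N = M

section Aux
variable {T X : Type*} [Group T] [TopologicalSpace T] [UniformSpace X] [CompactSpace X]
    [T2Space X] [MulAction T X] [ContinuousSMul T X]

lemma env_closed : IsClosed (envSemigroup T X) := isClosed_closure

lemma env_compact : IsCompact (envSemigroup T X) := (env_closed).isCompact

lemma trans_mem_env (t : T) : (fun x : X => t • x) ∈ envSemigroup T X :=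
  subset_closure (mem_range_self t)

lemma env_nonempty : (envSemigroup T X).Nonempty := ⟨_, trans_mem_env 1⟩

lemma continuous_comp_right' (q : X → X) : Continuous fun f : X → X => f ∘ q :=
  continuous_pi fun x => continuous_apply (q x)

lemma continuous_smul_left' (t : T) : Continuous fun f : X → X => (fun x => t • f x) :=
  continuous_pi fun x => (continuous_const_smul t).comp (continuous_apply x)

lemma smul_mem_env {q : X → X} (hq : q ∈ envSemigroup T X) (t : T) :
    (fun x => t • q x) ∈ envSemigroup T X := by
  have h1 : (fun f : X → X => fun x => t • f x) '' (Set.range fun s : T => fun x : X => s • x)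
      ⊆ envSemigroup T X := by
    rintro _ ⟨_, ⟨s, rfl⟩, rfl⟩
    show (fun x : X => t • s • x) ∈ envSemigroup T X
    have : (fun x : X => t • s • x) = (fun x : X => (t * s) • x) := by
      funext x; rw [mul_smul]
    rw [this]; exact trans_mem_env _
  have := (image_closure_subset_closure_image (continuous_smul_left' (X := X) t))
    (mem_image_of_mem _ hq)
  exact (closure_minimal h1 env_closed) this

lemma comp_mem_env {p q : X → X} (hp : p ∈ envSemigroup T X) (hq : q ∈ envSemigroup T X) :
    p ∘ q ∈ envSemigroup T X := by
  have h1 : (fun f : X → X => f ∘ q) '' (Set.range fun s : T => fun x : X => s • x)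
      ⊆ envSemigroup T X := by
    rintro _ ⟨_, ⟨s, rfl⟩, rfl⟩
    exact smul_mem_env hq s
  have := (image_closure_subset_closure_image (continuous_comp_right' (X := X) q))
    (mem_image_of_mem _ hp)
  exact (closure_minimal h1 env_closed) this

/-- An idempotent of the enveloping semigroup of a distal flow is the identity. -/
lemma idem_eq_id (hdistal : ∀ x y : X, ProxPair T x y → x = y)
    {u : X → X} (huE : u ∈ envSemigroup T X) (huu : u ∘ u = u) : u = id := by
  funext x
  have hx : x = u x := by
    apply hdistal x (u x)
    intro U hU
    obtain ⟨U₁, hU₁, hU₁symm, hU₁comp⟩ := comp_symm_mem_uniformity_sets hU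
    obtain ⟨Uo, ⟨hUo, hUoopen⟩, hUosub⟩ := uniformity_hasBasis_open.mem_iff.mp hU₁
    -- the set of functions close to u at x and u x is an open nbhd of u
    set N : Set (X → X) := {f | (f x, u x) ∈ Uo ∧ (f (u x), u x) ∈ Uo} with hN
    have hNopen : IsOpen N := by
      apply IsOpen.inter
      · exact (hUoopen.preimage (by continuity : Continuous fun f : X → X => (f x, u x)))
      · exact (hUoopen.preimage (by continuity : Continuous fun f : X → X => (f (u x), u x)))
    have huN : u ∈ N := by
      constructor
      · exact refl_mem_uniformity hUo
      · have : u (u x) = u x := congrFun huu x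
        rw [this]; exact refl_mem_uniformity hUo
    obtain ⟨f, hfN, t, rfl⟩ := _root_.mem_closure_iff.mp huE N hNopen huN
    refine ⟨t, hU₁comp (SetRel.prodMk_mem_comp (hUosub hfN.1) (hU₁symm.symm _ _ (hUosub hfN.2)))⟩
  exact hx.symm

/-- Ellis: for distal actions, every element of the enveloping semigroup has a left inverse. -/
lemma exists_left_inverse (hdistal : ∀ x y : X, ProxPair T x y → x = y)
    {p : X → X} (hp : p ∈ envSemigroup T X) :
    ∃ q ∈ envSemigroup T X, q ∘ p = id := by
  classical
  letI : Mul (X → X) := ⟨fun f g => f ∘ g⟩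
  letI : Semigroup (X → X) := ⟨fun _ _ _ => rfl⟩
  have hmul : ∀ f g : X → X, f * g = f ∘ g := fun _ _ => rfl
  have hcont : ∀ r : X → X, Continuous (· * r) := fun r => continuous_comp_right' r
  set S : Set (X → X) := (fun f : X → X => f ∘ p) '' envSemigroup T X with hS
  have hScomp : IsCompact S := env_compact.image (continuous_comp_right' p)
  have hSne : S.Nonempty := Set.Nonempty.image _ env_nonempty
  have hSmul : ∀ x ∈ S, ∀ y ∈ S, x * y ∈ S := by
    rintro _ ⟨r, hr, rfl⟩ _ ⟨r', hr', rfl⟩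
    refine ⟨(r ∘ p) ∘ r', comp_mem_env (comp_mem_env hr hp) hr', ?_⟩
    rw [hmul]; rfl
  obtain ⟨u, huS, hu⟩ := exists_idempotent_in_compact_subsemigroup
    hcont S hSne hScomp hSmul
  have huE : u ∈ envSemigroup T X := by
    obtain ⟨r, hr, hru⟩ := huS
    exact hru ▸ comp_mem_env hr hp
  have hid : u = id := idem_eq_id hdistal huE (by rw [← hmul]; exact hu)
  obtain ⟨r, hr, hru⟩ := huS
  exact ⟨r, hr, hru.trans hid⟩

/-- Orbit density in the enveloping semigroup (minimality of (E(X),T) for distal flows). -/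
lemma orbit_dense (hdistal : ∀ x y : X, ProxPair T x y → x = y)
    {p : X → X} (hp : p ∈ envSemigroup T X) {O : Set (X → X)} (hO : IsOpen O)
    (hOE : (O ∩ envSemigroup T X).Nonempty) : ∃ t : T, (fun x => t • p x) ∈ O := by
  obtain ⟨q, hqE, hqp⟩ := exists_left_inverse hdistal hp
  obtain ⟨r, hrO, hrE⟩ := hOE
  -- r = (r ∘ q) ∘ p and r ∘ q ∈ E = closure of translations
  have hrqE : r ∘ q ∈ envSemigroup T X := comp_mem_env hrE hqE
  have hr_eq : (r ∘ q) ∘ p = r := by rw [Function.comp_assoc, hqp]; rfl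
  -- the preimage of O under (· ∘ p) is an open set containing r ∘ q ∈ closure(range trans)
  have hmem : r ∘ q ∈ (fun f : X → X => f ∘ p) ⁻¹' O := by
    simp only [mem_preimage, hr_eq]; exact hrO
  obtain ⟨f, hfO, t, rfl⟩ := _root_.mem_closure_iff.mp hrqE _
    (hO.preimage (continuous_comp_right' p)) hmem
  exact ⟨t, hfO⟩

end Aux

/-- If `(X, T)` is distal and has a minimal sensitive subsystem, then the induced
flow `(E(X), T)` on the enveloping semigroup is sensitive. -/
theorem env_sensitive_of_distal_minimal_sensitive {T X : Type*} [Group T]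
    [TopologicalSpace T] [IsTopologicalGroup T] [UniformSpace X] [CompactSpace X]
    [T2Space X] [MulAction T X] [ContinuousSMul T X]
    (hdistal : ∀ x y : X, ProxPair T x y → x = y)
    (Y : Set X) (hmin : IsMinimalSubset T Y) (hsens : SensitiveOn T Y) :
    SensitiveOn T (envSemigroup T X) := by
  classical
  obtain ⟨⟨y0, hy0Y⟩, hYclosed, hYinv, hYmin⟩ := hmin
  obtain ⟨V, hV, hs⟩ := hsens
  set ev : (X → X) → X := fun f => f y0 with hev
  have hev_cont : Continuous ev := continuous_apply y0
  -- the evaluation image of the enveloping semigroup is Y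
  have hevE : ev '' envSemigroup T X = Y := by
    apply hYmin
    · -- ev '' E ⊆ Y
      rintro _ ⟨p, hp, rfl⟩
      have h1 : ev '' (Set.range fun t : T => fun x : X => t • x) ⊆ Y := by
        rintro _ ⟨_, ⟨t, rfl⟩, rfl⟩
        exact hYinv t y0 hy0Y
      have := image_closure_subset_closure_image hev_cont (mem_image_of_mem ev hp)
      exact (closure_minimal h1 hYclosed) this
    · exact Set.Nonempty.image _ env_nonempty
    · exact (env_compact.image hev_cont).isClosed
    · rintro t _ ⟨p, hp, rfl⟩
      exact ⟨fun x => t • p x, smul_mem_env hp t, rfl⟩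
  -- sensitivity constant
  obtain ⟨V₂, hV₂, hV₂symm, hV₂comp⟩ := comp_symm_mem_uniformity_sets hV
  refine ⟨Prod.map ev ev ⁻¹' V₂, (Pi.uniformContinuous_proj _ y0) hV₂, ?_⟩
  intro p hp U' hU'
  -- closed and open refinements of U'
  obtain ⟨Uc, ⟨hUc, hUc_closed⟩, hUcsub⟩ := uniformity_hasBasis_closed.mem_iff.mp hU'
  obtain ⟨Uo, ⟨hUo, hUo_open⟩, hUosub⟩ := uniformity_hasBasis_open.mem_iff.mp hUc
  set C' : Set (X → X) := envSemigroup T X ∩ (fun f => (p, f)) ⁻¹' Uc with hC'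
  have hC'closed : IsClosed C' :=
    env_closed.inter (hUc_closed.preimage (continuous_const.prodMk continuous_id))
  have hC'compact : IsCompact C' := hC'closed.isCompact
  set O : Set (X → X) := (fun f => (p, f)) ⁻¹' Uo with hO
  have hOopen : IsOpen O := hUo_open.preimage (continuous_const.prodMk continuous_id)
  have hpO : p ∈ O := refl_mem_uniformity hUo
  -- finite cover of E by preimages of O under the action
  have hcover : envSemigroup T X ⊆ ⋃ t : T, (fun q : X → X => fun x => t • q x) ⁻¹' O := by
    intro q hq
    obtain ⟨t, ht⟩ := orbit_dense hdistal hq hOopen ⟨p, hpO, hp⟩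
    exact mem_iUnion.mpr ⟨t, ht⟩
  obtain ⟨ts, hts⟩ := env_compact.elim_finite_subcover _
    (fun t : T => hOopen.preimage (continuous_smul_left' t)) hcover
  -- Y is covered by finitely many closed translated images
  set D : T → Set X := fun t => (fun y => t⁻¹ • y) '' (ev '' C') with hD
  have hDclosed : ∀ t, IsClosed (D t) :=
    fun t => (((hC'compact.image hev_cont).image (continuous_const_smul t⁻¹))).isClosed
  have hYcover : Y ⊆ ⋃ t ∈ ts, D t := by
    intro y hy
    rw [← hevE] at hy
    obtain ⟨q, hq, rfl⟩ := hy
    obtain ⟨t, htts, ht⟩ := mem_iUnion₂.mp (hts hq)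
    have htqC : (fun x => t • q x) ∈ C' :=
      ⟨smul_mem_env hq t, hUosub ht⟩
    refine mem_iUnion₂.mpr ⟨t, htts, t • ev q, ⟨_, htqC, rfl⟩, by simp⟩
  -- Baire category on the compact Hausdorff space Y
  haveI : CompactSpace Y := isCompact_iff_compactSpace.mp hYclosed.isCompact
  haveI : Nonempty Y := ⟨⟨y0, hy0Y⟩⟩
  have hbaire : ∃ t ∈ ts, ∃ G : Set X, IsOpen G ∧ (G ∩ Y).Nonempty ∧ G ∩ Y ⊆ D t := by
    have hsetcover : ⋃ t : ts, (Subtype.val ⁻¹' D t : Set Y) = univ := by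
      apply eq_univ_of_forall
      intro ⟨y, hyY⟩
      obtain ⟨t, htts, hyD⟩ := mem_iUnion₂.mp (hYcover hyY)
      exact mem_iUnion.mpr ⟨⟨t, htts⟩, hyD⟩
    obtain ⟨⟨t, htts⟩, hne⟩ := nonempty_interior_of_iUnion_of_closed
      (fun t : ts => (hDclosed t).preimage continuous_subtype_val) hsetcover
    obtain ⟨⟨y1, hy1Y⟩, hy1int⟩ := hne
    obtain ⟨s, hsub, hsopen, hy1s⟩ := mem_interior.mp hy1int
    obtain ⟨G, hGopen, rfl⟩ := isOpen_induced_iff.mp hsopen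
    refine ⟨t, htts, G, hGopen, ⟨y1, hy1s, hy1Y⟩, ?_⟩
    rintro y ⟨hyG, hyY⟩
    exact hsub (show (⟨y, hyY⟩ : Y) ∈ Subtype.val ⁻¹' G from hyG)
  obtain ⟨t, htts, G, hGopen, ⟨y1, hy1G, hy1Y⟩, hGsub⟩ := hbaire
  -- translate the open set into the image of C'
  set G' : Set X := (fun y => t⁻¹ • y) ⁻¹' G with hG'
  have hG'open : IsOpen G' := hGopen.preimage (continuous_const_smul t⁻¹)
  have hG'sub : G' ∩ Y ⊆ ev '' C' := by
    rintro y ⟨hyG', hyY⟩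
    have h1 : t⁻¹ • y ∈ G ∩ Y := ⟨hyG', hYinv t⁻¹ y hyY⟩
    obtain ⟨z, hz, hzy⟩ := hGsub h1
    exact (smul_left_cancel t⁻¹ hzy) ▸ hz
  have hy1' : t • y1 ∈ G' ∩ Y := by
    constructor
    · show t⁻¹ • t • y1 ∈ G
      rw [inv_smul_smul]; exact hy1G
    · exact hYinv t y1 hy1Y
  -- apply sensitivity of Y at t • y1
  obtain ⟨U1, hU1, hball⟩ := UniformSpace.mem_nhds_iff.mp (hG'open.mem_nhds hy1'.1)
  obtain ⟨y2, hy2Y, hy12, t2, hsep⟩ := hs (t • y1) hy1'.2 U1 hU1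
  have hy2G' : y2 ∈ G' ∩ Y := ⟨hball hy12, hy2Y⟩
  obtain ⟨q1, hq1C, hq1ev⟩ := hG'sub hy1'
  obtain ⟨q2, hq2C, hq2ev⟩ := hG'sub hy2G'
  -- at least one of q1, q2 is separated from p at time t2
  by_cases hcase : (t2 • p, t2 • q1) ∈ Prod.map ev ev ⁻¹' V₂
  · refine ⟨q2, hq2C.1, hUcsub hq2C.2, t2, fun hmem => ?_⟩
    have h1 : (t2 • (t • y1), t2 • ev p) ∈ V₂ := by
      have := hcase
      simp only [mem_preimage, Prod.map_apply] at this
      rw [← hq1ev]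
      exact hV₂symm.symm _ _ this
    have h2 : (t2 • ev p, t2 • y2) ∈ V₂ := by
      simp only [mem_preimage, Prod.map_apply] at hmem
      rw [← hq2ev]
      exact hmem
    exact hsep (hV₂comp (SetRel.prodMk_mem_comp h1 h2))
  · exact ⟨q1, hq1C.1, hUcsub hq1C.2, t2, hcase⟩
end

section
/- If T is abelian and the flow (X,T) is proximal, then the induced flow (E(X),T) is proximal; conversely, if (X,T) is point-transitive and (E(X),T) is proximal, then (X,T) is proximal. -/
open Filter Set Topology Uniformity

section Aux

variable {T X : Type*} [CommGroup T] [TopologicalSpace T] [UniformSpace X] [CompactSpace X] [T2Space X]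
  [MulAction T X] [ContinuousSMul T X]

/-- The orbit closure of a proximal pair meets the diagonal. -/
lemma diag_mem_orbit_closure {v u : X} (h : ProxPair T v u) :
    ∃ w : X, (w, w) ∈ closure (Set.range fun t : T => (t • v, t • u)) := by
  set A := Set.range fun t : T => (t • v, t • u) with hA
  have hne : (𝓤 X ⊓ 𝓟 A).NeBot := by
    rw [inf_principal_neBot_iff]
    intro U hU
    obtain ⟨t, ht⟩ := h U hU
    exact ⟨(t • v, t • u), ht, ⟨t, rfl⟩⟩
  obtain ⟨⟨z1, z2⟩, hz⟩ := exists_clusterPt_of_compactSpace (𝓤 X ⊓ 𝓟 A)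
  have h1 : z1 = z2 := eq_of_clusterPt_uniformity (hz.mono inf_le_left)
  have h2 : (z1, z2) ∈ closure A := mem_closure_iff_clusterPt.2 (hz.mono inf_le_right)
  subst h1
  exact ⟨z1, h2⟩

lemma smul_mem_env_s16 (t : T) {p : X → X} (hp : p ∈ envSemigroup T X) :
    t • p ∈ envSemigroup T X := by
  have hc : Continuous fun f : X → X => t • f := by
    apply continuous_pi
    intro x
    exact (continuous_const_smul t).comp (continuous_apply x)
  have himg : (fun f : X → X => t • f) ''
      (Set.range fun s : T => fun x : X => s • x) ⊆
      Set.range fun s : T => fun x : X => s • x := by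
    rintro _ ⟨_, ⟨s, rfl⟩, rfl⟩
    exact ⟨t * s, by funext x; simp [Pi.smul_apply, mul_smul]⟩
  have := image_closure_subset_closure_image (s := Set.range fun s : T => fun x : X => s • x) hc
  exact closure_mono himg (this ⟨p, hp, rfl⟩)

/-- Key lemma: there is an element of the enveloping semigroup which is constant
on any given finite set. -/
lemma exists_const_on [Nonempty X] (hprox : ∀ x y : X, ProxPair T x y) (S : Finset X) :
    ∃ p ∈ envSemigroup T X, ∃ v : X, ∀ z ∈ S, p z = v := by
  classical
  induction S using Finset.induction_on with
  | empty =>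
      refine ⟨id, ?_, Classical.arbitrary X, by simp⟩
      apply subset_closure
      exact ⟨1, by funext x; simp⟩
  | @insert a S ha ih =>
      obtain ⟨p, hpE, v, hv⟩ := ih
      rcases S.eq_empty_or_nonempty with rfl | ⟨b, hb⟩
      · exact ⟨p, hpE, p a, by simp⟩
      · have hvb : p b = v := hv b hb
        obtain ⟨w, hw⟩ := diag_mem_orbit_closure (T := T) (hprox v (p a))
        set A₁ := Set.range fun t : T => t • p with hA₁
        have hA₁E : closure A₁ ⊆ envSemigroup T X := by
          apply closure_minimal _ isClosed_closure
          rintro _ ⟨t, rfl⟩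
          exact smul_mem_env_s16 t hpE
        have hcomp : IsCompact (closure A₁) := isClosed_closure.isCompact
        have hev : Continuous fun f : X → X => (f b, f a) :=
          (continuous_apply b).prodMk (continuous_apply a)
        have himg : (Set.range fun t : T => (t • v, t • (p a))) ⊆
            (fun f : X → X => (f b, f a)) '' closure A₁ := by
          rintro _ ⟨t, rfl⟩
          exact ⟨t • p, subset_closure ⟨t, rfl⟩, by simp [Pi.smul_apply, hvb]⟩
        have hclosed : IsClosed ((fun f : X → X => (f b, f a)) '' closure A₁) :=
          (hcomp.image hev).isClosed
        have hsub := closure_minimal himg hclosed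
        obtain ⟨q, hq, hqeq⟩ := hsub hw
        have hqb : q b = w := congrArg Prod.fst hqeq
        have hqa : q a = w := congrArg Prod.snd hqeq
        have hconst : ∀ z ∈ S, q z = q b := by
          intro z hz
          have hcl : IsClosed {f : X → X | f z = f b} :=
            isClosed_eq (continuous_apply z) (continuous_apply b)
          have hAsub : A₁ ⊆ {f : X → X | f z = f b} := by
            rintro _ ⟨t, rfl⟩
            simp [Pi.smul_apply, hv z hz, hvb]
          exact closure_minimal hAsub hcl hq
        refine ⟨q, hA₁E hq, w, ?_⟩
        intro z hz
        rcases Finset.mem_insert.1 hz with rfl | hz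
        · exact hqa
        · rw [hconst z hz, hqb]

/-- Simultaneous proximality to a single point, on a finite set. -/
lemma exists_simultaneous [Nonempty X] (hprox : ∀ x y : X, ProxPair T x y) (S : Finset X)
    {W : Set (X × X)} (hW : W ∈ 𝓤 X) :
    ∃ t : T, ∃ v : X, ∀ z ∈ S, (t • z, v) ∈ W := by
  obtain ⟨p, hpE, v, hv⟩ := exists_const_on hprox S
  set W₀ := SetRel.symmetrize W with hW₀
  have hW₀mem : W₀ ∈ 𝓤 X := symmetrize_mem_uniformity hW
  have hN : (⋂ z ∈ (S : Set X), (fun f : X → X => f z) ⁻¹' UniformSpace.ball v W₀) ∈ 𝓝 p := by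
    rw [Filter.biInter_mem S.finite_toSet]
    intro z hz
    rw [Finset.mem_coe] at hz
    apply ContinuousAt.preimage_mem_nhds (continuous_apply z).continuousAt
    rw [hv z hz]
    exact UniformSpace.ball_mem_nhds v hW₀mem
  obtain ⟨f, hfN, hfR⟩ := mem_closure_iff_nhds.1 hpE _ hN
  obtain ⟨t, rfl⟩ := hfR
  refine ⟨t, v, fun z hz => ?_⟩
  have := Set.mem_iInter₂.1 hfN z (Finset.mem_coe.2 hz)
  have h1 : (v, t • z) ∈ W₀ := this
  exact SetRel.symmetrize_subset_self ((SetRel.comm (R := W₀)).1 h1)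

end Aux

/-- If `T` is abelian and the flow `(X, T)` is proximal, then the induced flow
`(E(X), T)` (pointwise uniformity, `T` acting by left composition) is proximal;
conversely, if `(X, T)` is point-transitive and `(E(X), T)` is proximal, then
`(X, T)` is proximal. -/
theorem env_proximal {T X : Type*} [CommGroup T] [TopologicalSpace T]
    [IsTopologicalGroup T] [UniformSpace X] [CompactSpace X] [T2Space X]
    [MulAction T X] [ContinuousSMul T X] :
    ((∀ x y : X, ProxPair T x y) →
        ∀ p ∈ envSemigroup T X, ∀ q ∈ envSemigroup T X, ProxPair T p q) ∧
      ((∃ x₀ : X, Dense (Set.range fun t : T => t • x₀)) →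
        (∀ p ∈ envSemigroup T X, ∀ q ∈ envSemigroup T X, ProxPair T p q) →
        ∀ x y : X, ProxPair T x y) := by
  constructor
  · -- forward direction
    intro hprox p hp q hq U hU
    rcases isEmpty_or_nonempty X with hX | hX
    · have hpq : p = q := funext fun x => (IsEmpty.false x).elim
      subst hpq
      exact ⟨1, refl_mem_uniformity hU⟩
    · -- decompose U using the product uniformity
      rw [Pi.uniformity] at hU
      rw [Filter.mem_iInf'] at hU
      obtain ⟨I, hIfin, V, hV, -, hUeq, -⟩ := hU
      choose W hWmem hWsub using fun x => Filter.mem_comap.1 (hV x)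
      -- a single entourage working for all coordinates in I
      have hWI : (⋂ x ∈ I, W x) ∈ 𝓤 X := (Filter.biInter_mem hIfin).2 fun x _ => hWmem x
      obtain ⟨W₀, hW₀mem, hW₀symm, hW₀comp⟩ := comp_symm_of_uniformity hWI
      -- the finite set of relevant points
      have hSfin : (p '' I ∪ q '' I).Finite := (hIfin.image p).union (hIfin.image q)
      obtain ⟨t, v, htv⟩ := exists_simultaneous hprox hSfin.toFinset hW₀mem
      refine ⟨t, ?_⟩
      rw [hUeq]
      refine Set.mem_iInter₂.2 fun x hx => ?_
      apply hWsub x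
      have h1 : (t • (p x), v) ∈ W₀ :=
        htv _ (hSfin.mem_toFinset.2 (Or.inl ⟨x, hx, rfl⟩))
      have h2 : (t • (q x), v) ∈ W₀ :=
        htv _ (hSfin.mem_toFinset.2 (Or.inr ⟨x, hx, rfl⟩))
      exact Set.mem_iInter₂.1
        (hW₀comp (SetRel.prodMk_mem_comp h1 (hW₀symm h2))) x hx
  · -- converse direction
    intro ⟨x₀, hdense⟩ hEprox x y U hU
    -- evaluation at x₀ is surjective from the enveloping semigroup
    have hcomp : IsCompact (envSemigroup T X) := isClosed_closure.isCompact
    have hev : Continuous fun f : X → X => f x₀ := continuous_apply x₀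
    have hclosed : IsClosed ((fun f : X → X => f x₀) '' envSemigroup T X) :=
      (hcomp.image hev).isClosed
    have hsurj : ∀ z : X, ∃ p ∈ envSemigroup T X, p x₀ = z := by
      intro z
      have hsub : Set.range (fun t : T => t • x₀) ⊆
          (fun f : X → X => f x₀) '' envSemigroup T X := by
        rintro _ ⟨t, rfl⟩
        exact ⟨fun x => t • x, subset_closure ⟨t, rfl⟩, rfl⟩
      have := hclosed.closure_subset_iff.2 hsub (hdense z)
      obtain ⟨p, hp, hpz⟩ := this
      exact ⟨p, hp, hpz⟩
    obtain ⟨p, hpE, hpx⟩ := hsurj x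
    obtain ⟨q, hqE, hqx⟩ := hsurj y
    have hUmem : {fg : (X → X) × (X → X) | (fg.1 x₀, fg.2 x₀) ∈ U} ∈ 𝓤 (X → X) := by
      rw [Pi.uniformity]
      exact Filter.mem_iInf_of_mem x₀ (Filter.preimage_mem_comap hU)
    obtain ⟨t, ht⟩ := hEprox p hpE q hqE _ hUmem
    refine ⟨t, ?_⟩
    have : ((t • p) x₀, (t • q) x₀) ∈ U := ht
    rwa [Pi.smul_apply, Pi.smul_apply, hpx, hqx] at this
end
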